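/- Let x be a nonsingular vector of V(2n,2), let X = span{x}, G = X^⊥ ⊓ Π, H = X^⊥ ⊓ Σ, and P = G^⊥ ⊓ Σ. Then the subspace (G ⊔ H)^⊥ is a line (it has dimension 2), and it contains both the vector x and the point P. -/

import Mathlib

/-- The hyperbolic quadratic form on `V(2n,2)`:
`Q x = ∑_{i=0}^{n-1} x (2i) * x (2i+1)`. -/
def Q (n : ℕ) (x : Fin (2*n) → ZMod 2) : ZMod 2 :=
  ∑ i : Fin n, x ⟨2*i.1, by have := i.2; omega⟩ * x ⟨2*i.1+1, by have := i.2; omega⟩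

/-- The bilinear form associated with `Q`: `B u v = Q (u+v) + Q u + Q v`. -/
def B (n : ℕ) (u v : Fin (2*n) → ZMod 2) : ZMod 2 :=
  Q n (u + v) + Q n u + Q n v

lemma B_eq (n : ℕ) (u v : Fin (2*n) → ZMod 2) :
    B n u v = ∑ i : Fin n,
      (u ⟨2*i.1, by have := i.2; omega⟩ * v ⟨2*i.1+1, by have := i.2; omega⟩
        + u ⟨2*i.1+1, by have := i.2; omega⟩ * v ⟨2*i.1, by have := i.2; omega⟩) := by
  have key : ∀ a b c d : ZMod 2, (a+c)*(b+d) + a*b + c*d = a*d + c*b := by decide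
  simp only [B, Q, Pi.add_apply, ← Finset.sum_add_distrib]
  exact Finset.sum_congr rfl fun i _ => by rw [key]; ring

lemma B_add_left (n : ℕ) (u v w : Fin (2*n) → ZMod 2) :
    B n (u + v) w = B n u w + B n v w := by
  simp only [B_eq, Pi.add_apply, ← Finset.sum_add_distrib]
  exact Finset.sum_congr rfl fun i _ => by ring

lemma B_smul_left (n : ℕ) (c : ZMod 2) (v w : Fin (2*n) → ZMod 2) :
    B n (c • v) w = c * B n v w := by
  simp only [B_eq, Pi.smul_apply, smul_eq_mul, Finset.mul_sum]
  exact Finset.sum_congr rfl fun i _ => by ring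

/-- The perp `S^⊥ = {v : B v s = 0 for all s ∈ S}` of a subspace `S`
with respect to the bilinear form `B`. -/
def perp (n : ℕ) (S : Submodule (ZMod 2) (Fin (2*n) → ZMod 2)) :
    Submodule (ZMod 2) (Fin (2*n) → ZMod 2) where
  carrier := {v | ∀ s ∈ S, B n v s = 0}
  zero_mem' := by intro s _; simp [B_eq]
  add_mem' := by
    intro a b ha hb s hs
    rw [B_add_left, ha s hs, hb s hs, add_zero]
  smul_mem' := by
    intro c v hv s hs
    rw [B_smul_left, hv s hs, mul_zero]

/-- `Π`, the span of the even-indexed standard basis vectors `e_{2i}`,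
a maximal totally singular subspace. -/
def PiSub (n : ℕ) : Submodule (ZMod 2) (Fin (2*n) → ZMod 2) :=
  Submodule.span (ZMod 2) {v | ∃ j : Fin (2*n), j.1 % 2 = 0 ∧ v = Pi.single j 1}

/-- `Σ`, the span of the odd-indexed standard basis vectors `e_{2i+1}`,
a maximal totally singular subspace disjoint from `Π`. -/
def SigmaSub (n : ℕ) : Submodule (ZMod 2) (Fin (2*n) → ZMod 2) :=
  Submodule.span (ZMod 2) {v | ∃ j : Fin (2*n), j.1 % 2 = 1 ∧ v = Pi.single j 1}

/-- For a nonsingular vector `x`, with `X = span{x}`, `G = X^⊥ ⊓ Π`, `H = X^⊥ ⊓ Σ`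
and `P = G^⊥ ⊓ Σ`, the subspace `(G ⊔ H)^⊥` is a line (has dimension 2) containing
both the vector `x` and the point `P`. -/


-- AUX LEMMAS

lemma B_comm (n : ℕ) (u v : Fin (2*n) → ZMod 2) : B n u v = B n v u := by
  simp only [B_eq]
  exact Finset.sum_congr rfl fun i _ => by ring

lemma B_add_right (n : ℕ) (u v w : Fin (2*n) → ZMod 2) :
    B n u (v + w) = B n u v + B n u w := by
  rw [B_comm, B_add_left, B_comm n v, B_comm n w]

lemma B_smul_right (n : ℕ) (c : ZMod 2) (u v : Fin (2*n) → ZMod 2) :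
    B n u (c • v) = c * B n u v := by
  rw [B_comm, B_smul_left, B_comm]

lemma B_single_even (n : ℕ) (v : Fin (2*n) → ZMod 2) (k : Fin n) :
    B n v (Pi.single (⟨2*k.1, by have := k.2; omega⟩ : Fin (2*n)) 1) =
      v ⟨2*k.1+1, by have := k.2; omega⟩ := by
  rw [B_eq, Finset.sum_eq_single k]
  · rw [Pi.single_eq_of_ne (Fin.ne_of_val_ne (by simp)), Pi.single_eq_same]; ring
  · intro i _ hik
    have hv : i.1 ≠ k.1 := fun h => hik (Fin.ext h)
    rw [Pi.single_eq_of_ne (Fin.ne_of_val_ne (by simp; omega)),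
      Pi.single_eq_of_ne (Fin.ne_of_val_ne (by simp; omega))]
    ring
  · simp

lemma B_single_odd (n : ℕ) (v : Fin (2*n) → ZMod 2) (k : Fin n) :
    B n v (Pi.single (⟨2*k.1+1, by have := k.2; omega⟩ : Fin (2*n)) 1) =
      v ⟨2*k.1, by have := k.2; omega⟩ := by
  rw [B_eq, Finset.sum_eq_single k]
  · rw [Pi.single_eq_same, Pi.single_eq_of_ne (Fin.ne_of_val_ne (by simp))]; ring
  · intro i _ hik
    have hv : i.1 ≠ k.1 := fun h => hik (Fin.ext h)
    rw [Pi.single_eq_of_ne (Fin.ne_of_val_ne (by simp; omega)),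
      Pi.single_eq_of_ne (Fin.ne_of_val_ne (by simp; omega))]
    ring
  · simp

/-- `B` bundled as a bilinear form. -/
def Bbl (n : ℕ) : LinearMap.BilinForm (ZMod 2) (Fin (2*n) → ZMod 2) :=
  LinearMap.mk₂ (ZMod 2) (B n) (B_add_left n) (B_smul_left n) (B_add_right n) (B_smul_right n)

lemma Bbl_apply (n : ℕ) (u v : Fin (2*n) → ZMod 2) : Bbl n u v = B n u v := rfl

lemma perp_eq_orthogonal (n : ℕ) (S : Submodule (ZMod 2) (Fin (2*n) → ZMod 2)) :
    perp n S = (Bbl n).orthogonal S := by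
  ext v
  constructor
  · intro hv s hs
    show Bbl n s v = 0
    rw [Bbl_apply, B_comm]
    exact hv s hs
  · intro hv s hs
    rw [B_comm]
    exact hv s hs

lemma Bbl_nondegenerate (n : ℕ) : (Bbl n).Nondegenerate := by
  refine (LinearMap.IsRefl.nondegenerate_iff_separatingLeft
    (fun u v h => by rw [Bbl_apply, B_comm]; exact h)).mpr ?_
  intro v hv
  funext j
  rcases Nat.even_or_odd j.1 with he | ho
  · obtain ⟨c, hc⟩ := he
    have hcn : c < n := by have := j.2; omega
    have := hv (Pi.single (⟨2*c+1, by omega⟩ : Fin (2*n)) 1)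
    rw [Bbl_apply] at this
    have h2 := B_single_odd n v ⟨c, hcn⟩
    simp only at h2
    rw [h2] at this
    have : v ⟨2*c, by omega⟩ = 0 := this
    convert this using 2
    exact Fin.ext (by simp; omega)
    rfl
  · obtain ⟨c, hc⟩ := ho
    have hcn : c < n := by have := j.2; omega
    have := hv (Pi.single (⟨2*c, by omega⟩ : Fin (2*n)) 1)
    rw [Bbl_apply] at this
    have h2 := B_single_even n v ⟨c, hcn⟩
    simp only at h2
    rw [h2] at this
    have : v ⟨2*c+1, by omega⟩ = 0 := this
    convert this using 2
    exact Fin.ext (by simp; omega)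
    rfl

lemma Bbl_isRefl (n : ℕ) : (Bbl n).IsRefl := by
  intro u v h
  rw [Bbl_apply, B_comm]
  exact h

lemma mem_PiSub (n : ℕ) (v : Fin (2*n) → ZMod 2) :
    v ∈ PiSub n ↔ ∀ j : Fin (2*n), j.1 % 2 = 1 → v j = 0 := by
  constructor
  · intro hv
    induction hv using Submodule.span_induction with
    | mem w hw =>
      obtain ⟨j', hj', rfl⟩ := hw
      intro j hj
      rw [Pi.single_eq_of_ne (fun h => by rw [h] at hj; omega)]
    | zero => intro j _; rfl
    | add a b _ _ ha hb => intro j hj; simp [Pi.add_apply, ha j hj, hb j hj]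
    | smul c a _ ha => intro j hj; simp [Pi.smul_apply, ha j hj]
  · intro hv
    rw [← Finset.univ_sum_single v]
    apply Submodule.sum_mem
    intro j _
    rcases Nat.mod_two_eq_zero_or_one j.1 with he | ho
    · have h1 : (Pi.single j (v j) : Fin (2*n) → ZMod 2) = v j • Pi.single j 1 := by
        funext t
        by_cases h : t = j
        · subst h; simp
        · simp [Pi.single_eq_of_ne h]
      rw [h1]
      exact Submodule.smul_mem _ _ (Submodule.subset_span ⟨j, he, rfl⟩)
    · rw [hv j ho, Pi.single_zero]
      exact Submodule.zero_mem _

lemma mem_SigmaSub (n : ℕ) (v : Fin (2*n) → ZMod 2) :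
    v ∈ SigmaSub n ↔ ∀ j : Fin (2*n), j.1 % 2 = 0 → v j = 0 := by
  constructor
  · intro hv
    induction hv using Submodule.span_induction with
    | mem w hw =>
      obtain ⟨j', hj', rfl⟩ := hw
      intro j hj
      rw [Pi.single_eq_of_ne (fun h => by rw [h] at hj; omega)]
    | zero => intro j _; rfl
    | add a b _ _ ha hb => intro j hj; simp [Pi.add_apply, ha j hj, hb j hj]
    | smul c a _ ha => intro j hj; simp [Pi.smul_apply, ha j hj]
  · intro hv
    rw [← Finset.univ_sum_single v]
    apply Submodule.sum_mem
    intro j _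
    rcases Nat.mod_two_eq_zero_or_one j.1 with he | ho
    · rw [hv j he, Pi.single_zero]
      exact Submodule.zero_mem _
    · have h1 : (Pi.single j (v j) : Fin (2*n) → ZMod 2) = v j • Pi.single j 1 := by
        funext t
        by_cases h : t = j
        · subst h; simp
        · simp [Pi.single_eq_of_ne h]
      rw [h1]
      exact Submodule.smul_mem _ _ (Submodule.subset_span ⟨j, ho, rfl⟩)

lemma mem_perp_span (n : ℕ) (x v : Fin (2*n) → ZMod 2) :
    v ∈ perp n (Submodule.span (ZMod 2) {x}) ↔ B n v x = 0 := by
  constructor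
  · intro hv; exact hv x (Submodule.mem_span_singleton_self x)
  · intro hv s hs
    obtain ⟨c, rfl⟩ := Submodule.mem_span_singleton.mp hs
    rw [B_smul_right, hv, mul_zero]

lemma B_sigma_sigma (n : ℕ) (u v : Fin (2*n) → ZMod 2)
    (hu : u ∈ SigmaSub n) (hv : v ∈ SigmaSub n) : B n u v = 0 := by
  rw [mem_SigmaSub] at hu hv
  rw [B_eq]
  apply Finset.sum_eq_zero
  intro i _
  rw [hu ⟨2*i.1, by have := i.2; omega⟩ (by simp),
    hv ⟨2*i.1, by have := i.2; omega⟩ (by simp)]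
  ring

/-- Projection onto even coordinates. -/
def projE (n : ℕ) : (Fin (2*n) → ZMod 2) →ₗ[ZMod 2] (Fin (2*n) → ZMod 2) where
  toFun v := fun j => if j.1 % 2 = 0 then v j else 0
  map_add' u v := by funext j; by_cases h : j.1 % 2 = 0 <;> simp [h]
  map_smul' c v := by funext j; by_cases h : j.1 % 2 = 0 <;> simp [h]

/-- Projection onto odd coordinates. -/
def projO (n : ℕ) : (Fin (2*n) → ZMod 2) →ₗ[ZMod 2] (Fin (2*n) → ZMod 2) where
  toFun v := fun j => if j.1 % 2 = 1 then v j else 0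
  map_add' u v := by funext j; by_cases h : j.1 % 2 = 1 <;> simp [h]
  map_smul' c v := by funext j; by_cases h : j.1 % 2 = 1 <;> simp [h]

/-- The map `v ↦ (B (projE v) x, B (projO v) x)`. -/
def phi (n : ℕ) (x : Fin (2*n) → ZMod 2) :
    (Fin (2*n) → ZMod 2) →ₗ[ZMod 2] (ZMod 2 × ZMod 2) :=
  LinearMap.prod (((Bbl n).flip x).comp (projE n)) (((Bbl n).flip x).comp (projO n))

lemma phi_apply (n : ℕ) (x v : Fin (2*n) → ZMod 2) :
    phi n x v = (B n (projE n v) x, B n (projO n v) x) := rfl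

lemma sup_eq_ker (n : ℕ) (x : Fin (2*n) → ZMod 2) :
    (perp n (Submodule.span (ZMod 2) {x}) ⊓ PiSub n) ⊔
      (perp n (Submodule.span (ZMod 2) {x}) ⊓ SigmaSub n) = LinearMap.ker (phi n x) := by
  ext v
  rw [Submodule.mem_sup, LinearMap.mem_ker]
  constructor
  · rintro ⟨g, ⟨hg1, hg2⟩, h, ⟨hh1, hh2⟩, rfl⟩
    replace hg2 := (mem_PiSub n g).mp hg2
    replace hh2 := (mem_SigmaSub n h).mp hh2
    have he : projE n (g + h) = g := by
      funext j
      show (if j.1 % 2 = 0 then g j + h j else 0) = g j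
      rcases Nat.mod_two_eq_zero_or_one j.1 with h0 | h1
      · rw [if_pos h0, hh2 j h0, add_zero]
      · rw [if_neg (by omega), hg2 j h1]
    have ho : projO n (g + h) = h := by
      funext j
      show (if j.1 % 2 = 1 then g j + h j else 0) = h j
      rcases Nat.mod_two_eq_zero_or_one j.1 with h0 | h1
      · rw [if_neg (by omega), hh2 j h0]
      · rw [if_pos h1, hg2 j h1, zero_add]
    rw [phi_apply, he, ho, (mem_perp_span n x g).mp hg1, (mem_perp_span n x h).mp hh1]
    rfl
  · intro hv
    rw [phi_apply, Prod.mk_eq_zero] at hv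
    refine ⟨projE n v, ⟨(mem_perp_span n x _).mpr hv.1, ?_⟩,
      projO n v, ⟨(mem_perp_span n x _).mpr hv.2, ?_⟩, ?_⟩
    · exact (mem_PiSub n _).mpr fun j hj => by
        show (if j.1 % 2 = 0 then v j else 0) = 0
        rw [if_neg (by omega)]
    · exact (mem_SigmaSub n _).mpr fun j hj => by
        show (if j.1 % 2 = 1 then v j else 0) = 0
        rw [if_neg (by omega)]
    · funext j
      show (if j.1 % 2 = 0 then v j else 0) + (if j.1 % 2 = 1 then v j else 0) = v j
      rcases Nat.mod_two_eq_zero_or_one j.1 with h0 | h1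
      · rw [if_pos h0, if_neg (by omega), add_zero]
      · rw [if_neg (by omega), if_pos h1, zero_add]

lemma phi_surjective (n : ℕ) (x : Fin (2*n) → ZMod 2) (hx : Q n x = 1) :
    LinearMap.range (phi n x) = ⊤ := by
  obtain ⟨k, hk⟩ : ∃ k : Fin n,
      x ⟨2*k.1, by have := k.2; omega⟩ * x ⟨2*k.1+1, by have := k.2; omega⟩ ≠ 0 := by
    by_contra h
    push_neg at h
    have : Q n x = 0 := Finset.sum_eq_zero fun i _ => h i
    rw [this] at hx; exact absurd hx (by decide)
  have hmul : ∀ a b : ZMod 2, a * b ≠ 0 → a = 1 ∧ b = 1 := by decide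
  obtain ⟨hk1, hk2⟩ := hmul _ _ hk
  have hsingle : ∀ (p : Fin (2*n)) (j : Fin (2*n)), j ≠ p →
      (Pi.single p (1:ZMod 2) : Fin (2*n) → ZMod 2) j = 0 := fun p j h => by rw [Pi.single_eq_of_ne h]
  have hpe1 : projE n (Pi.single (⟨2*k.1, by have := k.2; omega⟩ : Fin (2*n)) 1) =
      Pi.single (⟨2*k.1, by have := k.2; omega⟩ : Fin (2*n)) 1 := by
    funext j
    show (if j.1 % 2 = 0 then _ else 0) = _
    rcases Nat.mod_two_eq_zero_or_one j.1 with h0 | h1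
    · rw [if_pos h0]
    · rw [if_neg (by omega), hsingle _ j (Fin.ne_of_val_ne (by simp; omega))]
  have hpo1 : projO n (Pi.single (⟨2*k.1, by have := k.2; omega⟩ : Fin (2*n)) 1) = 0 := by
    funext j
    show (if j.1 % 2 = 1 then _ else 0) = 0
    rcases Nat.mod_two_eq_zero_or_one j.1 with h0 | h1
    · rw [if_neg (by omega)]
    · rw [if_pos h1, hsingle _ j (Fin.ne_of_val_ne (by simp; omega))]
  have hpe2 : projE n (Pi.single (⟨2*k.1+1, by have := k.2; omega⟩ : Fin (2*n)) 1) = 0 := by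
    funext j
    show (if j.1 % 2 = 0 then _ else 0) = 0
    rcases Nat.mod_two_eq_zero_or_one j.1 with h0 | h1
    · rw [if_pos h0, hsingle _ j (Fin.ne_of_val_ne (by simp; omega))]
    · rw [if_neg (by omega)]
  have hpo2 : projO n (Pi.single (⟨2*k.1+1, by have := k.2; omega⟩ : Fin (2*n)) 1) =
      Pi.single (⟨2*k.1+1, by have := k.2; omega⟩ : Fin (2*n)) 1 := by
    funext j
    show (if j.1 % 2 = 1 then _ else 0) = _
    rcases Nat.mod_two_eq_zero_or_one j.1 with h0 | h1
    · rw [if_neg (by omega), hsingle _ j (Fin.ne_of_val_ne (by simp; omega))]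
    · rw [if_pos h1]
  have hb1 : B n (Pi.single (⟨2*k.1, by have := k.2; omega⟩ : Fin (2*n)) 1) x = 1 := by
    rw [B_comm, B_single_even, hk2]
  have hb2 : B n (Pi.single (⟨2*k.1+1, by have := k.2; omega⟩ : Fin (2*n)) 1) x = 1 := by
    rw [B_comm, B_single_odd, hk1]
  have h10 : phi n x (Pi.single (⟨2*k.1, by have := k.2; omega⟩ : Fin (2*n)) 1) = (1, 0) := by
    rw [phi_apply, hpe1, hpo1, hb1]
    congr 1
    show B n (0 : Fin (2*n) → ZMod 2) x = 0
    rw [B_eq]; simp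
  have h01 : phi n x (Pi.single (⟨2*k.1+1, by have := k.2; omega⟩ : Fin (2*n)) 1) = (0, 1) := by
    rw [phi_apply, hpe2, hpo2, hb2]
    have : B n (0 : Fin (2*n) → ZMod 2) x = 0 := by rw [B_eq]; simp
    rw [this]
  rw [eq_top_iff]
  rintro ⟨a, b⟩ -
  have : (a, b) = a • (1, (0:ZMod 2)) + b • ((0:ZMod 2), 1) := by
    simp [Prod.ext_iff]
  rw [this]
  exact Submodule.add_mem _ (Submodule.smul_mem _ a ⟨_, h10⟩)
    (Submodule.smul_mem _ b ⟨_, h01⟩)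

theorem perp_sup_is_line (n : ℕ) (hn : 2 ≤ n) (x : Fin (2*n) → ZMod 2) (hx : Q n x = 1) :
    Module.finrank (ZMod 2)
        (perp n ((perp n (Submodule.span (ZMod 2) {x}) ⊓ PiSub n) ⊔
          (perp n (Submodule.span (ZMod 2) {x}) ⊓ SigmaSub n)) :
          Submodule (ZMod 2) (Fin (2*n) → ZMod 2)) = 2 ∧
    x ∈ perp n ((perp n (Submodule.span (ZMod 2) {x}) ⊓ PiSub n) ⊔
          (perp n (Submodule.span (ZMod 2) {x}) ⊓ SigmaSub n)) ∧
    perp n (perp n (Submodule.span (ZMod 2) {x}) ⊓ PiSub n) ⊓ SigmaSub n ≤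
      perp n ((perp n (Submodule.span (ZMod 2) {x}) ⊓ PiSub n) ⊔
          (perp n (Submodule.span (ZMod 2) {x}) ⊓ SigmaSub n)) := by
  have hkerW := sup_eq_ker n x
  have hV : Module.finrank (ZMod 2) (Fin (2*n) → ZMod 2) = 2*n :=
    Module.finrank_fin_fun (ZMod 2)
  have hrange : Module.finrank (ZMod 2) (LinearMap.range (phi n x)) = 2 := by
    rw [phi_surjective n x hx, finrank_top, Module.finrank_prod, Module.finrank_self]
  have hrn := LinearMap.finrank_range_add_finrank_ker (phi n x)
  rw [hV, hrange] at hrn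
  have hWrank : Module.finrank (ZMod 2)
      ((perp n (Submodule.span (ZMod 2) {x}) ⊓ PiSub n) ⊔
        (perp n (Submodule.span (ZMod 2) {x}) ⊓ SigmaSub n) :
        Submodule (ZMod 2) (Fin (2*n) → ZMod 2)) = 2*n - 2 := by
    rw [hkerW]; omega
  refine ⟨?_, ?_, ?_⟩
  · rw [perp_eq_orthogonal,
      LinearMap.BilinForm.finrank_orthogonal (Bbl_nondegenerate n),
      hV, hWrank]
    omega
  · intro s hs
    obtain ⟨g, hg, h, hh, rfl⟩ := Submodule.mem_sup.mp hs
    rw [B_add_right, B_comm, (mem_perp_span n x g).mp hg.1,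
      B_comm, (mem_perp_span n x h).mp hh.1, add_zero]
  · rintro p ⟨hp1, hp2⟩ s hs
    obtain ⟨g, hg, h, hh, rfl⟩ := Submodule.mem_sup.mp hs
    rw [B_add_right, hp1 g hg, B_sigma_sigma n p h hp2 hh.2, add_zero]
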